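/- During the AC scan of a text T of length n, the total number of state moves (both goto transitions via δ and failure transitions via f) is at most 2n. -/

import Mathlib

/-- The AC scan of a text of length `n` makes at most `2n` state
moves. Abstractly: if `d i` is the depth `|φ(s_i)|` of the `i`-th visited state
in a run of `m` moves starting at depth `0`, where each goto move increases the
depth by at most `1` (root self-loops keep depth `0`), each failure move
strictly decreases the depth, and exactly `n` of the moves are goto moves, then
`m ≤ 2n`. -/
theorem stmt15 (n m : ℕ) (d : Fin (m + 1) → ℕ) (isGoto : Fin m → Bool)
    (h0 : d 0 = 0)
    (hstep : ∀ i : Fin m,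
      if isGoto i then d i.succ ≤ d i.castSucc + 1 else d i.succ < d i.castSucc)
    (hn : (Finset.univ.filter fun i => isGoto i = true).card = n) :
    m ≤ 2 * n := by
  classical
  set g : ℕ → Bool := fun j => if h : j < m then isGoto ⟨j, h⟩ else false with hg
  set D : ℕ → ℕ := fun j => if h : j < m + 1 then d ⟨j, h⟩ else 0 with hD
  have key : ∀ k, k ≤ m →
      ((Finset.range k).filter fun j => g j = false).card + D k ≤
      ((Finset.range k).filter fun j => g j = true).card := by
    intro k
    induction k with
    | zero => intro _; simp [hD, h0]
    | succ k ih =>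
      intro hk
      have hkm : k < m := hk
      have ih' := ih (le_of_lt hkm)
      have hstepk := hstep ⟨k, hkm⟩
      have hDk : D k = d ⟨k, by omega⟩ := by simp [hD, Nat.lt_succ_of_lt hkm, hkm.le]
      have hDk1 : D (k+1) = d ⟨k+1, by omega⟩ := by
        simp [hD, Nat.succ_lt_succ hkm, hkm]
      have hcast : (⟨k, hkm⟩ : Fin m).castSucc = ⟨k, by omega⟩ := rfl
      have hsucc : (⟨k, hkm⟩ : Fin m).succ = ⟨k+1, by omega⟩ := rfl
      have hgk : g k = isGoto ⟨k, hkm⟩ := by simp [hg, hkm]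
      rw [Finset.range_add_one, Finset.filter_insert, Finset.filter_insert]
      by_cases hb : isGoto ⟨k, hkm⟩ = true
      · rw [if_neg (by simp [hgk, hb]), if_pos (by simp [hgk, hb])]
        rw [Finset.card_insert_of_notMem (by simp)]
        have hle : d ⟨k+1, by omega⟩ ≤ d ⟨k, by omega⟩ + 1 := by
          simpa [hb, hsucc, hcast] using hstepk
        omega
      · rw [if_pos (by simp [hgk]; simpa using hb), if_neg (by simp [hgk, hb])]
        rw [Finset.card_insert_of_notMem (by simp)]
        have hlt : d ⟨k+1, by omega⟩ < d ⟨k, by omega⟩ := by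
          simpa [hb, hsucc, hcast] using hstepk
        omega
  have hm := key m le_rfl
  have cardeq : ∀ b : Bool, ((Finset.range m).filter fun j => g j = b).card =
      (Finset.univ.filter fun i : Fin m => isGoto i = b).card := by
    intro b
    rw [Finset.card_filter, Finset.card_filter, ← Fin.sum_univ_eq_sum_range]
    refine Finset.sum_congr rfl fun i _ => ?_
    simp [hg, i.isLt]
  have hG : ((Finset.range m).filter fun j => g j = true).card = n := by
    rw [cardeq true, hn]
  have hsplit : ((Finset.range m).filter fun j => g j = true).card +
      ((Finset.range m).filter fun j => g j = false).card = m := by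
    have := Finset.card_filter_add_card_filter_not
      (s := Finset.range m) (p := fun j => g j = true)
    simpa [Finset.card_range, Bool.not_eq_true] using this
  omega
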